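/- Let (X,d) be a compact metric space with a distinguished base point x₀ ∈ X and let α ∈ (0,1). Then for every function f : X → ℝ with f(x₀) = 0 and |f(x) − f(y)| ≤ d(x,y)^α for all x,y ∈ X, there exists a sequence of functions fₙ : X → ℝ such that for every n: fₙ(x₀) = 0, |fₙ(x) − fₙ(y)| ≤ d(x,y)^α for all x,y ∈ X, fₙ is little α-Hölder, and such that fₙ(x) → f(x) as n → ∞ for every x ∈ X. -/

import Mathlib

open Filter Real

/-- Subadditivity of `t ^ α` for `0 ≤ α ≤ 1`. -/
private lemma holder_aux_rpow_subadd {α : ℝ} (hα₀ : 0 ≤ α) (hα₁ : α ≤ 1)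
    {s t : ℝ} (hs : 0 ≤ s) (ht : 0 ≤ t) : (s + t) ^ α ≤ s ^ α + t ^ α := by
  have h := NNReal.rpow_add_le_add_rpow s.toNNReal t.toNNReal hα₀ hα₁
  have h' : ((s.toNNReal + t.toNNReal : NNReal) : ℝ) ^ α
      ≤ ((s.toNNReal : ℝ)) ^ α + ((t.toNNReal : ℝ)) ^ α := by
    exact_mod_cast h
  simpa [Real.coe_toNNReal s hs, Real.coe_toNNReal t ht] using h'

/-- Mixed case of subadditivity of the modulus `min (K*t) (t^α)`. -/
private lemma holder_aux_mixed {α K s t : ℝ} (hα₀ : 0 < α) (hα₁ : α ≤ 1)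
    (hK : 0 < K) (hs : 0 ≤ s) (ht : 0 ≤ t) (hmt : t ^ α ≤ K * t) :
    min (K * (s + t)) ((s + t) ^ α) ≤ K * s + t ^ α := by
  rcases eq_or_lt_of_le ht with rfl | ht'
  · have : (0:ℝ) ^ α = 0 := Real.zero_rpow hα₀.ne'
    calc min (K * (s + 0)) ((s + 0) ^ α) ≤ K * (s + 0) := min_le_left _ _
      _ = K * s + (0:ℝ) ^ α := by rw [this]; ring
  · have hst : (s + t) ^ α ≤ K * s + t ^ α := by
      have h1 : s + t = t * (1 + s / t) := by field_simp; ring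
      have h2 : (s + t) ^ α = t ^ α * (1 + s / t) ^ α := by
        rw [h1, Real.mul_rpow ht'.le (by positivity)]
      have h3 : (1 + s / t) ^ α ≤ 1 + α * (s / t) :=
        rpow_one_add_le_one_add_mul_self (by linarith [div_nonneg hs ht'.le]) hα₀.le hα₁
      have h4 : t ^ α * (1 + s / t) ^ α ≤ t ^ α * (1 + α * (s / t)) :=
        mul_le_mul_of_nonneg_left h3 (Real.rpow_nonneg ht _)
      have h5 : t ^ α * (1 + α * (s / t)) = t ^ α + (t ^ α / t) * (α * s) := by
        field_simp
      have h6 : t ^ α / t ≤ K := (div_le_iff₀ ht').mpr hmt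
      have h7 : (t ^ α / t) * (α * s) ≤ K * s := by
        have h8 : (t ^ α / t) * (α * s) ≤ K * (α * s) :=
          mul_le_mul_of_nonneg_right h6 (by positivity)
        have h9 : K * (α * s) ≤ K * s := by
          nlinarith [mul_nonneg (mul_nonneg hK.le hs) (by linarith : (0:ℝ) ≤ 1 - α)]
        linarith
      rw [h2] at *
      linarith [h4, h5 ▸ h4]
    exact le_trans (min_le_right _ _) hst

/-- Subadditivity of the modulus `min (K*t) (t^α)`. -/
private lemma holder_aux_subadd {α K s t : ℝ} (hα₀ : 0 < α) (hα₁ : α ≤ 1)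
    (hK : 0 < K) (hs : 0 ≤ s) (ht : 0 ≤ t) :
    min (K * (s + t)) ((s + t) ^ α)
      ≤ min (K * s) (s ^ α) + min (K * t) (t ^ α) := by
  rcases le_total (s ^ α) (K * s) with hms | hms <;>
    rcases le_total (t ^ α) (K * t) with hmt | hmt
  · -- both rpow branches
    rw [min_eq_right hms, min_eq_right hmt]
    exact le_trans (min_le_right _ _) (holder_aux_rpow_subadd hα₀.le hα₁ hs ht)
  · -- s rpow, t linear: mixed with roles swapped
    rw [min_eq_right hms, min_eq_left hmt]
    have := holder_aux_mixed hα₀ hα₁ hK ht hs hms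
    rw [add_comm t s] at this
    linarith [this]
  · -- s linear, t rpow
    rw [min_eq_left hms, min_eq_right hmt]
    exact holder_aux_mixed hα₀ hα₁ hK hs ht hmt
  · -- both linear
    rw [min_eq_left hms, min_eq_left hmt]
    calc min (K * (s + t)) ((s + t) ^ α) ≤ K * (s + t) := min_le_left _ _
      _ = K * s + K * t := by ring

/-- For a pointed compact metric space `(X, d)` and `α ∈ (0,1)`, every `f : X → ℝ` with
`f x₀ = 0` that is `α`-Hölder with constant `1` is the pointwise limit of a sequence of
functions vanishing at `x₀`, `α`-Hölder with constant `1`, and little `α`-Hölder. -/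
theorem biduality_holder_pointwise_approx
    {X : Type*} [MetricSpace X] [CompactSpace X] (x₀ : X)
    (α : ℝ) (hα₀ : 0 < α) (hα₁ : α < 1)
    (f : X → ℝ) (hf₀ : f x₀ = 0)
    (hf : ∀ x y : X, |f x - f y| ≤ dist x y ^ α) :
    ∃ F : ℕ → X → ℝ,
      (∀ n, F n x₀ = 0) ∧
      (∀ n, ∀ x y : X, |F n x - F n y| ≤ dist x y ^ α) ∧
      (∀ n, ∀ ε > (0 : ℝ), ∃ δ > (0 : ℝ), ∀ x y : X,
        0 < dist x y → dist x y < δ → |F n x - F n y| ≤ ε * dist x y ^ α) ∧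
      (∀ x : X, Filter.Tendsto (fun n => F n x) Filter.atTop (nhds (f x))) := by
  have hne : Nonempty X := ⟨x₀⟩
  -- bound on distances
  obtain ⟨z₀, -, hz₀⟩ := isCompact_univ.exists_isMaxOn ⟨x₀, Set.mem_univ x₀⟩
    ((continuous_id.dist continuous_const).continuousOn (s := Set.univ))
  set D := dist z₀ x₀ with hDdef
  have hD' : ∀ z : X, dist z x₀ ≤ D := fun z => hz₀ (Set.mem_univ z)
  -- lower bound on f
  have hflb : ∀ z : X, -(D ^ α) ≤ f z := by
    intro z
    have h1 := hf z x₀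
    rw [hf₀, sub_zero] at h1
    have h2 : dist z x₀ ^ α ≤ D ^ α :=
      Real.rpow_le_rpow dist_nonneg (hD' z) hα₀.le
    have := abs_le.mp h1
    linarith [this.1]
  set K : ℕ → ℝ := fun n => (n : ℝ) + 1 with hKdef
  have hKpos : ∀ n, 0 < K n := fun n => by positivity
  set m : ℕ → ℝ → ℝ := fun n t => min (K n * t) (t ^ α) with hmdef
  have hm_nonneg : ∀ n t, 0 ≤ t → 0 ≤ m n t := fun n t ht =>
    le_min (by positivity) (Real.rpow_nonneg ht _)
  have hm_zero : ∀ n, m n 0 = 0 := fun n => by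
    simp [hmdef, Real.zero_rpow hα₀.ne']
  have hm_mono : ∀ n {s t : ℝ}, 0 ≤ s → s ≤ t → m n s ≤ m n t := by
    intro n s t hs hst
    exact le_min
      (le_trans (min_le_left _ _) (by nlinarith [hKpos n]))
      (le_trans (min_le_right _ _) (Real.rpow_le_rpow hs hst hα₀.le))
  set g : ℕ → X → ℝ := fun n x => ⨅ z, (f z + m n (dist x z)) with hgdef
  have hbdd : ∀ n x, BddBelow (Set.range fun z => f z + m n (dist x z)) := by
    intro n x
    refine ⟨-(D ^ α), ?_⟩
    rintro v ⟨z, rfl⟩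
    show -(D ^ α) ≤ f z + m n (dist x z)
    have := hm_nonneg n _ (dist_nonneg (x := x) (y := z))
    linarith [hflb z]
  have hg_le : ∀ n x, g n x ≤ f x := by
    intro n x
    have := ciInf_le (hbdd n x) x
    simpa [hm_zero n] using this
  set c : ℕ → ℝ := fun n => ((K n) ^ ((1:ℝ)/(α-1))) ^ α with hcdef
  have hc_nonneg : ∀ n, 0 ≤ c n := fun n =>
    Real.rpow_nonneg (Real.rpow_nonneg (hKpos n).le _) _
  -- key pointwise lower bound
  have hg_ge : ∀ n x, f x - c n ≤ g n x := by
    intro n x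
    apply le_ciInf
    intro z
    have h1 : f x - f z ≤ dist x z ^ α := (abs_le.mp (hf x z)).2
    -- suffices: dist x z ^ α ≤ m n (dist x z) + c n
    have h2 : dist x z ^ α ≤ m n (dist x z) + c n := by
      rcases le_total (dist x z ^ α) (K n * dist x z) with h | h
      · rw [hmdef]
        have := min_eq_right h
        simp only []
        rw [this]
        linarith [hc_nonneg n]
      · -- K n * d ≤ d ^ α, so d is small
        set d := dist x z with hd
        have hd0 : 0 ≤ d := dist_nonneg
        rcases eq_or_lt_of_le hd0 with h0 | h0
        · rw [hmdef]; simp only []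
          rw [← h0]
          simp [Real.zero_rpow hα₀.ne']
          positivity
        · have hda : d ^ α ≤ m n d + c n := by
            have hKd : K n ≤ d ^ (α - 1) := by
              have : d ^ (α - 1) = d ^ α / d := by
                rw [Real.rpow_sub h0, Real.rpow_one]
              rw [this, le_div_iff₀ h0]
              linarith
            have hdle : d ≤ (K n) ^ ((1:ℝ)/(α-1)) := by
              have h3 : (d ^ (α-1)) ^ ((1:ℝ)/(α-1)) ≤ (K n) ^ ((1:ℝ)/(α-1)) :=
                Real.rpow_le_rpow_of_nonpos (hKpos n) hKd
                  (by
                    apply div_nonpos_of_nonneg_of_nonpos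
                    · norm_num
                    · linarith)
              have h4 : (d ^ (α-1)) ^ ((1:ℝ)/(α-1)) = d := by
                rw [← Real.rpow_mul hd0]
                rw [mul_one_div, div_self (by linarith : α - 1 ≠ 0), Real.rpow_one]
              rwa [h4] at h3
            have h5 : d ^ α ≤ c n :=
              Real.rpow_le_rpow hd0 hdle hα₀.le
            have := hm_nonneg n d hd0
            linarith
          exact hda
    linarith
  -- Hölder-type modulus bound
  have hg_mod : ∀ n x y, g n x - g n y ≤ m n (dist x y) := by
    intro n x y
    rw [sub_le_iff_le_add, add_comm]
    have : ∀ z : X, g n x ≤ f z + m n (dist y z) + m n (dist x y) := by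
      intro z
      calc g n x ≤ f z + m n (dist x z) := ciInf_le (hbdd n x) z
        _ ≤ f z + m n (dist y z + dist x y) := by
            have htri : dist x z ≤ dist y z + dist x y := by
              rw [add_comm]; exact dist_triangle x y z
            have := hm_mono n (dist_nonneg (x := x) (y := z)) htri
            linarith
        _ ≤ f z + (m n (dist y z) + m n (dist x y)) := by
            have hsub : m n (dist y z + dist x y)
                ≤ m n (dist y z) + m n (dist x y) :=
              holder_aux_subadd hα₀ hα₁.le (hKpos n)
                (dist_nonneg (x := y) (y := z)) (dist_nonneg (x := x) (y := y))
            linarith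
        _ = f z + m n (dist y z) + m n (dist x y) := by ring
    have h6 : g n x - m n (dist x y) ≤ g n y := by
      apply le_ciInf
      intro z
      linarith [this z]
    linarith
  have hg_abs : ∀ n x y, |g n x - g n y| ≤ m n (dist x y) := by
    intro n x y
    rw [abs_sub_le_iff]
    refine ⟨hg_mod n x y, ?_⟩
    have := hg_mod n y x
    rwa [dist_comm y x] at this
  refine ⟨fun n x => g n x - g n x₀, fun n => sub_self _, ?_, ?_, ?_⟩
  · intro n x y
    have := hg_abs n x y
    have h7 : m n (dist x y) ≤ dist x y ^ α := min_le_right _ _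
    calc |g n x - g n x₀ - (g n y - g n x₀)| = |g n x - g n y| := by ring_nf
      _ ≤ dist x y ^ α := le_trans this h7
  · -- little Hölder
    intro n ε hε
    refine ⟨(ε / K n) ^ ((1:ℝ)/(1-α)), by positivity, ?_⟩
    intro x y hd0 hdδ
    have habs : |g n x - g n x₀ - (g n y - g n x₀)| = |g n x - g n y| := by ring_nf
    rw [habs]
    have h8 : |g n x - g n y| ≤ K n * dist x y :=
      le_trans (hg_abs n x y) (min_le_left _ _)
    have h9 : dist x y ^ (1 - α) < ε / K n := by
      have := Real.rpow_lt_rpow dist_nonneg hdδ (by linarith : (0:ℝ) < 1 - α)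
      rwa [← Real.rpow_mul (by positivity), one_div,
        inv_mul_cancel₀ (by linarith : (1:ℝ) - α ≠ 0), Real.rpow_one] at this
    have h10 : K n * dist x y ≤ ε * dist x y ^ α := by
      have hα' : 0 ≤ dist x y ^ α := Real.rpow_nonneg dist_nonneg _
      have h11 : K n * dist x y ^ (1 - α) ≤ ε := by
        calc K n * dist x y ^ (1 - α) ≤ K n * (ε / K n) :=
              mul_le_mul_of_nonneg_left h9.le (hKpos n).le
          _ = ε := by field_simp; exact div_self (hKpos n).ne'
      calc K n * dist x y = (K n * dist x y ^ (1 - α)) * dist x y ^ α := by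
            rw [mul_assoc, ← Real.rpow_add hd0, sub_add_cancel, Real.rpow_one]
        _ ≤ ε * dist x y ^ α := mul_le_mul_of_nonneg_right h11 hα'
    linarith [h8, h10]
  · -- pointwise convergence
    intro x
    have hc_tendsto : Tendsto c atTop (nhds 0) := by
      have h1 : Tendsto (fun n : ℕ => (K n) ^ ((1:ℝ)/(α-1))) atTop (nhds 0) := by
        have h2 : Tendsto (fun t : ℝ => t ^ (-(1/(1-α)))) atTop (nhds 0) := by
          have h1α : (0:ℝ) < 1 - α := by linarith
          exact tendsto_rpow_neg_atTop (by positivity)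
        have h3 : Tendsto (fun n : ℕ => K n) atTop atTop := by
          apply tendsto_atTop_add_const_right
          exact tendsto_natCast_atTop_atTop
        have h4 := h2.comp h3
        have h5 : (1:ℝ)/(α-1) = -(1/(1-α)) := by
          rw [show α - 1 = -(1-α) by ring, one_div, one_div, inv_neg]
        rw [show (1:ℝ)/(α-1) = -(1/(1-α)) from h5]
        exact h4
      have h6 : ContinuousAt (fun t : ℝ => t ^ α) 0 :=
        Real.continuousAt_rpow_const 0 α (Or.inr hα₀.le)
      have h7 : Tendsto c atTop (nhds ((0:ℝ) ^ α)) := h6.tendsto.comp h1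
      rwa [Real.zero_rpow hα₀.ne'] at h7
    have hbound : ∀ n, ‖(g n x - g n x₀) - f x‖ ≤ 2 * c n := by
      intro n
      have h1 := hg_le n x
      have h2 := hg_ge n x
      have h3 := hg_le n x₀
      have h4 := hg_ge n x₀
      rw [hf₀] at h4
      rw [Real.norm_eq_abs, abs_le]
      constructor <;> nlinarith [hc_nonneg n]
    have h12 : Tendsto (fun n => 2 * c n) atTop (nhds 0) := by
      have := hc_tendsto.const_mul (2:ℝ)
      simpa only [mul_zero] using this
    have h8 : Tendsto (fun n => (g n x - g n x₀) - f x) atTop (nhds 0) :=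
      squeeze_zero_norm hbound h12
    have h9 := h8.add_const (f x)
    simpa using h9
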